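/- Let E be a Banach space. Then E admits an atomic decomposition if and only if E is isomorphic (as a topological vector space) to a complemented subspace of a Banach space possessing a Schauder basis. -/

import Mathlib

open Filter Topology

universe u

/-- A Banach space together with a Schauder basis: every element has a unique expansion
as a norm-convergent series in the basis vectors. -/
structure BanachWithBasis : Type (u + 1) where
  carrier : Type u
  [grp : NormedAddCommGroup carrier]
  [mod : NormedSpace ℝ carrier]
  [comp : CompleteSpace carrier]
  basis : ℕ → carrier
  basis_expansion : ∀ y : carrier, ∃! c : ℕ → ℝ,
    Filter.Tendsto (fun n => ∑ j ∈ Finset.range n, c j • basis j) Filter.atTop (nhds y)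

attribute [instance] BanachWithBasis.grp BanachWithBasis.mod BanachWithBasis.comp



open BoundedContinuousFunction
set_option linter.unusedSectionVars false
set_option maxHeartbeats 1000000

namespace ADProof

variable {X : Type*} [NormedAddCommGroup X] [NormedSpace ℝ X]



/-- The space of convergent sequences starting at 0 whose increments lie in `span {g n}`. -/
def W (g : ℕ → X) : Submodule ℝ (ℕ →ᵇ X) where
  carrier := {s | s 0 = 0 ∧ (∀ n, s (n + 1) - s n ∈ Submodule.span ℝ {g n}) ∧ CauchySeq ⇑s}
  add_mem' := by
    rintro s t ⟨hs0, hsi, hsc⟩ ⟨ht0, hti, htc⟩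
    refine ⟨by simp [hs0, ht0], fun n => ?_, ?_⟩
    · have : (s + t) (n + 1) - (s + t) n = (s (n+1) - s n) + (t (n+1) - t n) := by
        simp; abel
      rw [this]; exact Submodule.add_mem _ (hsi n) (hti n)
    · have : ⇑(s + t) = ⇑s + ⇑t := by ext n; simp
      rw [this]; exact hsc.add htc
  zero_mem' := ⟨by simp, fun n => by simp, by
    have : ⇑(0 : ℕ →ᵇ X) = fun _ : ℕ => (0 : X) := by ext n; simp
    rw [this]; exact cauchySeq_const 0⟩
  smul_mem' := by
    rintro c s ⟨hs0, hsi, hsc⟩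
    refine ⟨by simp [hs0], fun n => ?_, ?_⟩
    · have : (c • s) (n + 1) - (c • s) n = c • (s (n+1) - s n) := by
        simp [smul_sub]
      rw [this]; exact Submodule.smul_mem _ _ (hsi n)
    · have : ⇑(c • s) = (fun y => c • y) ∘ ⇑s := by ext n; simp
      rw [this]
      exact ((c • (ContinuousLinearMap.id ℝ X)).uniformContinuous).comp_cauchySeq hsc

theorem isClosed_cauchy : IsClosed {s : ℕ →ᵇ X | CauchySeq ⇑s} := by
  refine isClosed_of_closure_subset ?_
  intro s hs
  show CauchySeq ⇑s
  rw [Metric.cauchySeq_iff]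
  intro ε hε
  obtain ⟨t, ht, hst⟩ := Metric.mem_closure_iff.1 hs (ε/3) (by linarith)
  obtain ⟨N, hN⟩ := Metric.cauchySeq_iff.1 ht (ε/3) (by linarith)
  refine ⟨N, fun m hm n hn => ?_⟩
  have h1 : dist (s m) (t m) ≤ dist s t := dist_coe_le_dist m
  have h2 : dist (t n) (s n) ≤ dist t s := dist_coe_le_dist n
  have h3 := hN m hm n hn
  have h4 : dist (s m) (s n) ≤ dist (s m) (t m) + dist (t m) (t n) + dist (t n) (s n) :=
    dist_triangle4 _ _ _ _
  have h5 : dist t s = dist s t := dist_comm t s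
  linarith

theorem isClosed_W (g : ℕ → X) : IsClosed (W g : Set (ℕ →ᵇ X)) := by
  have h1 : IsClosed {s : ℕ →ᵇ X | s 0 = 0} :=
    isClosed_eq (continuous_eval_const _) continuous_const
  have h2 : ∀ n : ℕ, IsClosed {s : ℕ →ᵇ X | s (n+1) - s n ∈ Submodule.span ℝ {g n}} := by
    intro n
    exact IsClosed.preimage ((continuous_eval_const _).sub (continuous_eval_const _))
      ((Submodule.span ℝ {g n}).closed_of_finiteDimensional)
  have : (W g : Set (ℕ →ᵇ X)) =
      ({s : ℕ →ᵇ X | s 0 = 0} ∩ (⋂ n, {s : ℕ →ᵇ X | s (n+1) - s n ∈ Submodule.span ℝ {g n}}))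
        ∩ {s : ℕ →ᵇ X | CauchySeq ⇑s} := by
    ext s; simp [W, Set.mem_iInter, and_assoc]
  rw [this]
  exact ((h1.inter (isClosed_iInter h2)).inter isClosed_cauchy)

instance (g : ℕ → X) [CompleteSpace X] : CompleteSpace (W g) :=
  (isClosed_W g).completeSpace_coe




/-- basis vector: partial-sum sequence of the single vector `g j`. -/
noncomputable def bvec (g : ℕ → X) (j : ℕ) : ℕ →ᵇ X :=
  ofNormedAddCommGroup (fun n => if j < n then g j else 0)
    continuous_of_discreteTopology ‖g j‖ (by intro n; split <;> simp)

@[simp] theorem bvec_apply (g : ℕ → X) (j n : ℕ) :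
    bvec g j n = if j < n then g j else 0 := rfl

theorem partial_apply (g : ℕ → X) (c : ℕ → ℝ) (n m : ℕ) :
    (∑ j ∈ Finset.range n, c j • bvec g j) m = ∑ j ∈ Finset.range (min n m), c j • g j := by
  rw [BoundedContinuousFunction.sum_apply]
  have : ∀ j ∈ Finset.range n, (c j • bvec g j) m = if j < m then c j • g j else 0 := by
    intro j _; simp only [BoundedContinuousFunction.smul_apply, bvec_apply]
    split <;> simp
  rw [Finset.sum_congr rfl this]
  rw [Finset.sum_ite, Finset.sum_const_zero, add_zero]
  have hf : (Finset.range n).filter (fun j => j < m) = Finset.range (min n m) := by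
    ext j; simp [Finset.mem_filter, Finset.mem_range, lt_min_iff]
  rw [hf]





theorem bvec_zero (g : ℕ → X) (j : ℕ) : bvec g j 0 = 0 := by simp

theorem bvec_incr (g : ℕ → X) (j n : ℕ) :
    bvec g j (n + 1) - bvec g j n ∈ Submodule.span ℝ {g n} := by
  simp only [bvec_apply]
  rcases lt_trichotomy j n with h | h | h
  · rw [if_pos (by omega), if_pos h]
    simp [Submodule.zero_mem]
  · subst h
    rw [if_pos (by omega), if_neg (by omega), sub_zero]
    exact Submodule.mem_span_singleton_self _
  · rw [if_neg (by omega), if_neg (by omega)]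
    simp [Submodule.zero_mem]

theorem bvec_cauchy (g : ℕ → X) (j : ℕ) : CauchySeq (⇑(bvec g j)) := by
  have : Tendsto (⇑(bvec g j)) atTop (𝓝 (g j)) := by
    apply Tendsto.congr' (f₁ := fun _ => g j)
    · filter_upwards [eventually_gt_atTop j] with n hn
      simp [hn]
    · exact tendsto_const_nhds
  exact this.cauchySeq

/-- every element of W is the sequence of partial sums of its increments -/
theorem rep_of_incr {s : ℕ →ᵇ X} {t : ℕ → ℝ} {g : ℕ → X} (h0 : s 0 = 0)
    (hi : ∀ n, s (n + 1) - s n = t n • g n) (n : ℕ) :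
    s n = ∑ j ∈ Finset.range n, t j • g j := by
  induction n with
  | zero => simpa using h0
  | succ n ih =>
    rw [Finset.sum_range_succ, ← ih, ← hi n]; abel


theorem coeff_eq {g : ℕ → X} {s : ℕ →ᵇ X} {c : ℕ → ℝ}
    (h : Tendsto (fun n => ∑ j ∈ Finset.range n, c j • bvec g j) atTop (𝓝 s)) (j : ℕ) :
    c j • g j = s (j + 1) - s j := by
  have hcont : Continuous fun u : ℕ →ᵇ X => u (j+1) - u j :=
    (continuous_eval_const _).sub
      (continuous_eval_const _)
  have h2 := (hcont.tendsto s).comp h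
  have h3 : Tendsto (fun _ : ℕ => c j • g j) atTop (𝓝 (s (j+1) - s j)) := by
    apply h2.congr'
    filter_upwards [eventually_ge_atTop (j+1)] with n hn
    show (∑ i ∈ Finset.range n, c i • bvec g i) (j+1) - (∑ i ∈ Finset.range n, c i • bvec g i) j
        = c j • g j
    rw [partial_apply, partial_apply, min_eq_right (by omega), min_eq_right (by omega),
      Finset.sum_range_succ]
    abel
  exact tendsto_nhds_unique tendsto_const_nhds h3

theorem expansion {g : ℕ → X} (hg : ∀ n, g n ≠ 0) (s : ℕ →ᵇ X)
    (h0 : s 0 = 0) (hi : ∀ n, s (n + 1) - s n ∈ Submodule.span ℝ {g n}) (hc : CauchySeq ⇑s) :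
    ∃! c : ℕ → ℝ, Tendsto (fun n => ∑ j ∈ Finset.range n, c j • bvec g j) atTop (𝓝 s) := by
  choose t ht using fun n => Submodule.mem_span_singleton.1 (hi n)
  have hrep : ∀ n, s n = ∑ j ∈ Finset.range n, t j • g j :=
    rep_of_incr h0 (fun n => (ht n).symm)
  have hex : Tendsto (fun n => ∑ j ∈ Finset.range n, t j • bvec g j) atTop (𝓝 s) := by
    rw [Metric.tendsto_atTop]
    intro ε hε
    obtain ⟨N, hN⟩ := Metric.cauchySeq_iff.1 hc (ε/2) (by linarith)
    refine ⟨N, fun n hn => ?_⟩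
    have : dist (∑ j ∈ Finset.range n, t j • bvec g j) s ≤ ε/2 := by
      rw [BoundedContinuousFunction.dist_le (by linarith)]
      intro m
      rw [partial_apply, ← hrep (min n m)]
      rcases le_or_gt m n with h | h
      · rw [min_eq_right h, dist_self]; linarith
      · rw [min_eq_left h.le]
        exact (hN n hn m (by omega)).le
    linarith
  refine ⟨t, hex, fun c hcten => ?_⟩
  funext j
  have h1 := coeff_eq hcten j
  have h2 := coeff_eq hex j
  have : (c j - t j) • g j = 0 := by rw [sub_smul, h1, h2]; abel
  rcases smul_eq_zero.1 this with h | h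
  · linarith [sub_eq_zero.1 (by linarith [abs_nonneg (c j - t j)] : c j - t j = 0)]
  · exact absurd h (hg j)


end ADProof

namespace ADProof
variable {X : Type u} [NormedAddCommGroup X] [NormedSpace ℝ X]

theorem mem_W_iff {g : ℕ → X} {s : ℕ →ᵇ X} :
    s ∈ W g ↔ s 0 = 0 ∧ (∀ n, s (n + 1) - s n ∈ Submodule.span ℝ {g n}) ∧ CauchySeq ⇑s :=
  Iff.rfl

theorem bvec_mem (g : ℕ → X) (j : ℕ) : bvec g j ∈ W g :=
  ⟨bvec_zero g j, bvec_incr g j, bvec_cauchy g j⟩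

noncomputable def WSpace (g : ℕ → X) [CompleteSpace X] (hg : ∀ n, g n ≠ 0) :
    BanachWithBasis.{u} where
  carrier := W g
  basis := fun j => ⟨bvec g j, bvec_mem g j⟩
  basis_expansion := by
    rintro ⟨s, hs0, hsi, hsc⟩
    obtain ⟨t, hex, huniq⟩ := expansion hg s hs0 hsi hsc
    have key : ∀ c : ℕ → ℝ,
        Tendsto (fun n => ∑ j ∈ Finset.range n, c j • (⟨bvec g j, bvec_mem g j⟩ : W g))
          atTop (𝓝 ⟨s, hs0, hsi, hsc⟩) ↔
        Tendsto (fun n => ∑ j ∈ Finset.range n, c j • bvec g j) atTop (𝓝 s) := by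
      intro c
      rw [tendsto_subtype_rng]
      constructor <;> intro h <;> (apply h.congr; intro n; simp)
    exact ⟨t, (key t).2 hex, fun c hc => huniq c ((key c).1 hc)⟩

end ADProof

namespace ADProof
variable {X : Type u} [NormedAddCommGroup X] [NormedSpace ℝ X] [CompleteSpace X]

noncomputable def limW (g : ℕ → X) (s : W g) : X := limUnder atTop (⇑(s : ℕ →ᵇ X))

theorem tendsto_limW (g : ℕ → X) (s : W g) :
    Tendsto (fun n => (s : ℕ →ᵇ X) n) atTop (𝓝 (limW g s)) :=
  (s.2.2.2).tendsto_limUnder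

noncomputable def limCLM (g : ℕ → X) : W g →L[ℝ] X :=
  LinearMap.mkContinuous
    { toFun := limW g
      map_add' := by
        intro s t
        refine tendsto_nhds_unique ?_ ((tendsto_limW g s).add (tendsto_limW g t))
        exact (tendsto_limW g (s + t)).congr (fun n => by simp)
      map_smul' := by
        intro c s
        refine tendsto_nhds_unique ?_ ((tendsto_limW g s).const_smul c)
        exact (tendsto_limW g (c • s)).congr (fun n => by simp) }
    1 (by
      intro s
      rw [one_mul]
      refine le_of_tendsto (tendsto_limW g s).norm (Eventually.of_forall fun n => ?_)
      exact BoundedContinuousFunction.norm_coe_le_norm _ n)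

theorem tendsto_limCLM (g : ℕ → X) (s : W g) :
    Tendsto (fun n => (s : ℕ →ᵇ X) n) atTop (𝓝 (limCLM g s)) := tendsto_limW g s

end ADProof

namespace ADProof

theorem exists_psi {X : Type u} [NormedAddCommGroup X] [NormedSpace ℝ X] {x : X} (hx : x ≠ 0) :
    ∃ ψ : X →L[ℝ] ℝ, ψ x = 1 := by
  obtain ⟨ψ, -, hψ⟩ := exists_dual_vector ℝ x (norm_ne_zero_iff.2 hx)
  refine ⟨(‖x‖)⁻¹ • ψ, ?_⟩
  have hn : ‖x‖ ≠ 0 := norm_ne_zero_iff.2 hx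
  simp only [ContinuousLinearMap.smul_apply, hψ]
  simp [RCLike.ofReal_alg]
  field_simp

theorem basis_ne_zero (F : BanachWithBasis.{u}) (j : ℕ) : F.basis j ≠ 0 := by
  intro hj
  obtain ⟨c, hc, huniq⟩ := F.basis_expansion 0
  have h1 : Tendsto (fun n => ∑ k ∈ Finset.range n, (fun k => c k + if k = j then 1 else 0) k • F.basis k)
      atTop (𝓝 0) := by
    apply hc.congr
    intro n
    apply Finset.sum_congr rfl
    intro k _
    rcases eq_or_ne k j with rfl | h
    · simp [hj, add_smul]
    · simp [h]
  have h2 := huniq _ h1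
  have h3 := congrFun h2 j
  simp at h3

/-- the limit map from `W F.basis` to `F` is bijective -/
theorem limCLM_ker (F : BanachWithBasis.{u}) :
    (limCLM F.basis).ker = ⊥ := by
  rw [LinearMap.ker_eq_bot']
  intro s hs
  choose t ht using fun n => Submodule.mem_span_singleton.1 (s.2.2.1 n)
  have hrep : ∀ n, (s : ℕ →ᵇ F.carrier) n = ∑ j ∈ Finset.range n, t j • F.basis j :=
    rep_of_incr s.2.1 (fun n => (ht n).symm)
  have h1 : Tendsto (fun n => ∑ j ∈ Finset.range n, t j • F.basis j) atTop (𝓝 0) := by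
    rw [← hs]
    exact (tendsto_limCLM F.basis s).congr (fun n => hrep n)
  have h0 : Tendsto (fun n => ∑ j ∈ Finset.range n, (0:ℝ) • F.basis j) atTop (𝓝 (0 : F.carrier)) := by
    simpa using (tendsto_const_nhds : Tendsto (fun _ : ℕ => (0:F.carrier)) atTop _)
  obtain ⟨c, -, huniq⟩ := F.basis_expansion 0
  have hc : t = fun _ => (0:ℝ) := by
    rw [huniq t h1, huniq (fun _ => (0:ℝ)) h0]
  apply Subtype.ext
  apply BoundedContinuousFunction.ext
  intro n
  rw [hrep n]
  simp [congrFun hc]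

theorem limCLM_range (F : BanachWithBasis.{u}) :
    (limCLM F.basis).range = ⊤ := by
  rw [LinearMap.range_eq_top]
  intro y
  obtain ⟨c, hc, -⟩ := F.basis_expansion y
  set u : ℕ → F.carrier := fun n => ∑ j ∈ Finset.range n, c j • F.basis j with hu
  have hcu : CauchySeq u := hc.cauchySeq
  obtain ⟨R, -, hR⟩ := cauchySeq_bdd hcu
  have hb : ∀ n, ‖u n‖ ≤ R := by
    intro n
    have := hR n 0
    simp only [hu] at this ⊢
    simpa [Finset.range_zero, dist_eq_norm] using this.le
  set U : ℕ →ᵇ F.carrier :=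
    BoundedContinuousFunction.ofNormedAddCommGroup u continuous_of_discreteTopology R hb with hU
  have hUapp : ∀ n, U n = u n := fun _ => rfl
  have hmem : U ∈ W F.basis := by
    refine ⟨by simp [hUapp, hu], fun n => ?_, ?_⟩
    · rw [hUapp, hUapp, hu]
      simp only [Finset.sum_range_succ]
      rw [add_sub_cancel_left]
      exact Submodule.mem_span_singleton.2 ⟨c n, rfl⟩
    · exact hcu
  refine ⟨⟨U, hmem⟩, ?_⟩
  exact tendsto_nhds_unique (tendsto_limCLM F.basis ⟨U, hmem⟩) hc

theorem reverse {E : Type u} [NormedAddCommGroup E] [NormedSpace ℝ E] [CompleteSpace E]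
    (F : BanachWithBasis.{u}) (P : F.carrier →L[ℝ] F.carrier)
    (hP : ∀ w, P (P w) = P w)
    (e : E ≃L[ℝ] LinearMap.range (P : F.carrier →ₗ[ℝ] F.carrier)) :
    ∃ (x' : ℕ → E →L[ℝ] ℝ) (x : ℕ → E), ∀ v : E,
      Tendsto (fun n => ∑ j ∈ Finset.range n, x' j v • x j) atTop (𝓝 v) := by
  classical
  set f := F.basis with hf
  have hfne : ∀ j, f j ≠ 0 := basis_ne_zero F
  set L := limCLM f with hL
  letI R : W f ≃L[ℝ] F.carrier :=
    ContinuousLinearEquiv.ofBijective L (limCLM_ker F) (limCLM_range F)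
  choose ψ hψ using fun j => exists_psi (hfne j)
  -- coefficient functionals on W f
  set φ : ℕ → (W f →L[ℝ] ℝ) := fun j =>
    (ψ j).comp ((((BoundedContinuousFunction.evalCLM ℝ (j+1) : (ℕ →ᵇ F.carrier) →L[ℝ] F.carrier) -
        (BoundedContinuousFunction.evalCLM ℝ j : (ℕ →ᵇ F.carrier) →L[ℝ] F.carrier)) :
          (ℕ →ᵇ F.carrier) →L[ℝ] F.carrier).comp (W f).subtypeL) with hφ
  have hφ_apply : ∀ (j : ℕ) (s : W f),
      φ j s = ψ j ((s : ℕ →ᵇ F.carrier) (j+1) - (s : ℕ →ᵇ F.carrier) j) := by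
    intro j s
    rw [hφ]
    simp [BoundedContinuousFunction.evalCLM]
  -- key expansion with continuous coefficients
  have key : ∀ y : F.carrier,
      Tendsto (fun n => ∑ j ∈ Finset.range n, (φ j (R.symm y)) • f j) atTop (𝓝 y) := by
    intro y
    set s : W f := R.symm y with hsy
    choose t ht using fun n => Submodule.mem_span_singleton.1 (s.2.2.1 n)
    have hrep : ∀ n, (s : ℕ →ᵇ F.carrier) n = ∑ j ∈ Finset.range n, t j • f j :=
      rep_of_incr s.2.1 (fun n => (ht n).symm)
    have hφt : ∀ j, φ j s = t j := by
      intro j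
      rw [hφ_apply, ← ht j, map_smul, hψ j, smul_eq_mul, mul_one]
    have hLs : L s = y := by
      have : R s = y := R.apply_symm_apply y
      rwa [show (R s : F.carrier) = L s from rfl] at this
    have : Tendsto (fun n => (s : ℕ →ᵇ F.carrier) n) atTop (𝓝 y) := by
      rw [← hLs]; exact tendsto_limCLM f s
    apply this.congr
    intro n
    rw [hrep n]
    exact Finset.sum_congr rfl (fun j _ => by rw [hφt j])
  -- transfer to E
  set Plin := (P : F.carrier →ₗ[ℝ] F.carrier)
  have hPfix : ∀ y : F.carrier, y ∈ LinearMap.range Plin → P y = y := by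
    rintro y ⟨u, hu⟩
    have : P u = y := hu
    rw [← this, hP]
  set x' : ℕ → E →L[ℝ] ℝ := fun j =>
    (φ j).comp (((R.symm : F.carrier →L[ℝ] W f)).comp
      (((LinearMap.range Plin).subtypeL).comp (e : E →L[ℝ] LinearMap.range Plin))) with hx'
  have hPf_mem : ∀ j, P (f j) ∈ LinearMap.range Plin := fun j => ⟨f j, rfl⟩
  set x : ℕ → E := fun j => e.symm ⟨P (f j), hPf_mem j⟩ with hx
  refine ⟨x', x, fun v => ?_⟩
  set y : F.carrier := ((e v : LinearMap.range Plin) : F.carrier) with hy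
  have hyP : P y = y := hPfix y (e v).2
  have hx'v : ∀ j, x' j v = φ j (R.symm y) := fun j => rfl
  have h1 : Tendsto (fun n => ∑ j ∈ Finset.range n, (x' j v) • f j) atTop (𝓝 y) := by
    apply (key y).congr
    intro n
    exact Finset.sum_congr rfl (fun j _ => by rw [hx'v j])
  have h2 : Tendsto (fun n => ∑ j ∈ Finset.range n, (x' j v) • P (f j)) atTop (𝓝 y) := by
    have := (P.continuous.tendsto y).comp h1
    rw [hyP] at this
    apply this.congr
    intro n
    simp [map_sum]
  -- lift to the subtype
  have h3 : Tendsto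
      (fun n => ∑ j ∈ Finset.range n, (x' j v) • (⟨P (f j), hPf_mem j⟩ : LinearMap.range Plin))
      atTop (𝓝 (e v)) := by
    rw [tendsto_subtype_rng]
    apply h2.congr
    intro n
    simp
  have h4 := (e.symm.continuous.tendsto (e v)).comp h3
  rw [e.symm_apply_apply v] at h4
  apply h4.congr
  intro n
  show e.symm (∑ j ∈ Finset.range n, (x' j v) • (⟨P (f j), hPf_mem j⟩ : LinearMap.range Plin))
      = ∑ j ∈ Finset.range n, (x' j v) • x j
  rw [map_sum]
  exact Finset.sum_congr rfl (fun j _ => by rw [map_smul])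

end ADProof
section Forward

namespace ADProof

variable {E : Type u} [NormedAddCommGroup E] [NormedSpace ℝ E] [CompleteSpace E]

theorem forward (x' : ℕ → E →L[ℝ] ℝ) (x : ℕ → E)
    (hx : ∀ v : E, Tendsto (fun n => ∑ j ∈ Finset.range n, x' j v • x j) atTop (𝓝 v)) :
    ∃ (F : BanachWithBasis.{u}) (P : F.carrier →L[ℝ] F.carrier),
      (∀ w, P (P w) = P w) ∧
      Nonempty (E ≃L[ℝ] LinearMap.range (P : F.carrier →ₗ[ℝ] F.carrier)) := by
  classical
  -- the ambient product space
  set X : Type u := E × (ℕ →ᵇ ℝ) with hX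
  -- indicator sequences
  set e₀ : ℕ → (ℕ →ᵇ ℝ) := fun j => BoundedContinuousFunction.ofNormedAddCommGroup
    (fun m => if m = j then (1:ℝ) else 0) continuous_of_discreteTopology 1
    (by intro m; split <;> simp) with he₀
  have he₀app : ∀ j m, e₀ j m = if m = j then (1:ℝ) else 0 := fun j m => rfl
  set w : ℕ → ℝ := fun j => ((2:ℝ)^j * (1 + ‖x' j‖))⁻¹ with hw
  have hwpos : ∀ j, 0 < w j := by
    intro j
    apply inv_pos.2
    positivity
  have hwle : ∀ j, w j * (1 + ‖x' j‖) ≤ (1/2)^j := by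
    intro j
    have h1 : (0:ℝ) < 1 + ‖x' j‖ := by positivity
    show ((2:ℝ)^j * (1 + ‖x' j‖))⁻¹ * (1 + ‖x' j‖) ≤ (1/2)^j
    rw [mul_inv, mul_assoc, inv_mul_cancel₀ (ne_of_gt h1), mul_one, one_div, inv_pow]
  set g : ℕ → X := fun j => (x j, w j • e₀ j) with hg_def
  have hg : ∀ j, g j ≠ 0 := by
    intro j hj
    have h2 : (w j • e₀ j) = 0 := congrArg Prod.snd hj
    have h3 : (w j • e₀ j) j = 0 := by rw [h2]; rfl
    rw [BoundedContinuousFunction.smul_apply, he₀app, if_pos rfl, smul_eq_mul, mul_one] at h3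
    exact absurd h3 (ne_of_gt (hwpos j))
  -- component sequences
  set A : E → ℕ → E := fun v n => ∑ j ∈ Finset.range n, x' j v • x j with hA
  set B : E → ℕ → (ℕ →ᵇ ℝ) := fun v n => ∑ j ∈ Finset.range n, x' j v • (w j • e₀ j) with hB
  set sq : E → ℕ → X := fun v n => ∑ j ∈ Finset.range n, x' j v • g j with hsq
  have hsq_eq : ∀ v n, sq v n = (A v n, B v n) := by
    intro v n
    rw [hsq, hA, hB]
    apply Prod.ext
    · rw [Prod.fst_sum]
      exact Finset.sum_congr rfl (fun j _ => rfl)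
    · rw [Prod.snd_sum]
      exact Finset.sum_congr rfl (fun j _ => rfl)
  -- bound on B increments
  have hBdiff : ∀ v (n m : ℕ), n ≤ m → ‖B v m - B v n‖ ≤ (1/2)^n * ‖v‖ := by
    intro v n m hnm
    rw [hB]
    dsimp only
    rw [← Finset.sum_Ico_eq_sub _ hnm]
    have hb : (0:ℝ) ≤ (1/2)^n * ‖v‖ := by positivity
    rw [BoundedContinuousFunction.norm_le hb]
    intro k
    have happ : (∑ j ∈ Finset.Ico n m, x' j v • (w j • e₀ j)) k
        = ∑ j ∈ Finset.Ico n m, (x' j v * w j) * (if k = j then 1 else 0) := by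
      rw [BoundedContinuousFunction.sum_apply]
      apply Finset.sum_congr rfl
      intro j _
      rw [BoundedContinuousFunction.smul_apply, BoundedContinuousFunction.smul_apply, he₀app]
      simp [mul_assoc]
    rw [happ]
    have : ∑ j ∈ Finset.Ico n m, (x' j v * w j) * (if k = j then 1 else 0)
        = if k ∈ Finset.Ico n m then x' k v * w k else 0 := by
      rw [← Finset.sum_ite_eq' (Finset.Ico n m) k (fun j => x' j v * w j)]
      apply Finset.sum_congr rfl
      intro j _
      rcases eq_or_ne j k with rfl | h
      · simp
      · simp [h, Ne.symm h]
    rw [this]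
    split
    · rename_i hk
      have hkn : n ≤ k := (Finset.mem_Ico.1 hk).1
      have h1 : |x' k v * w k| ≤ (1/2)^k * ‖v‖ := by
        rw [abs_mul, abs_of_pos (hwpos k)]
        have h2 : |x' k v| ≤ ‖x' k‖ * ‖v‖ := (x' k).le_opNorm v
        have h3 : ‖x' k‖ * w k ≤ (1/2)^k := by
          calc ‖x' k‖ * w k ≤ (1 + ‖x' k‖) * w k := by
                have := (hwpos k).le
                nlinarith [norm_nonneg (x' k)]
            _ = w k * (1 + ‖x' k‖) := mul_comm _ _
            _ ≤ (1/2)^k := hwle k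
        calc |x' k v| * w k ≤ (‖x' k‖ * ‖v‖) * w k := by
              have := (hwpos k).le
              nlinarith [abs_nonneg (x' k v)]
          _ = (‖x' k‖ * w k) * ‖v‖ := by ring
          _ ≤ (1/2)^k * ‖v‖ := by nlinarith [norm_nonneg v]
      have h4 : ((1:ℝ)/2)^k ≤ (1/2)^n :=
        pow_le_pow_of_le_one (by norm_num) (by norm_num) hkn
      calc ‖x' k v * w k‖ = |x' k v * w k| := rfl
        _ ≤ (1/2)^k * ‖v‖ := h1
        _ ≤ (1/2)^n * ‖v‖ := by nlinarith [norm_nonneg v]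
    · simpa using hb
  have hBzero : ∀ v, B v 0 = 0 := by intro v; simp [hB]
  have hAzero : ∀ v, A v 0 = 0 := by intro v; simp [hA]
  -- Cauchy
  have hBcauchy : ∀ v, CauchySeq (B v) := by
    intro v
    rw [Metric.cauchySeq_iff]
    intro ε hε
    obtain ⟨N, hN⟩ : ∃ N : ℕ, ((1:ℝ)/2)^N * ‖v‖ < ε := by
      have h0 : Tendsto (fun n : ℕ => ((1:ℝ)/2)^n * ‖v‖) atTop (𝓝 (0 * ‖v‖)) :=
        (tendsto_pow_atTop_nhds_zero_of_lt_one (by norm_num) (by norm_num)).mul_const _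
      rw [zero_mul] at h0
      obtain ⟨N, hN⟩ := (h0.eventually (gt_mem_nhds hε)).exists
      exact ⟨N, hN⟩
    refine ⟨N, fun m hm n hn => ?_⟩
    rcases le_total n m with h | h
    · rw [dist_eq_norm]
      calc ‖B v m - B v n‖ ≤ (1/2)^n * ‖v‖ := hBdiff v n m h
        _ ≤ (1/2)^N * ‖v‖ := by
            have := pow_le_pow_of_le_one (by norm_num : (0:ℝ) ≤ 1/2) (by norm_num) hn
            nlinarith [norm_nonneg v]
        _ < ε := hN
    · rw [dist_eq_norm]
      calc ‖B v m - B v n‖ = ‖B v n - B v m‖ := by rw [← neg_sub, norm_neg]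
        _ ≤ (1/2)^m * ‖v‖ := hBdiff v m n h
        _ ≤ (1/2)^N * ‖v‖ := by
            have := pow_le_pow_of_le_one (by norm_num : (0:ℝ) ≤ 1/2) (by norm_num) hm
            nlinarith [norm_nonneg v]
        _ < ε := hN
  have hsqcauchy : ∀ v, CauchySeq (sq v) := by
    intro v
    have h1 : CauchySeq (fun n => (A v n, B v n)) := (hx v).cauchySeq.prodMk (hBcauchy v)
    have h2 : sq v = fun n => (A v n, B v n) := funext (hsq_eq v)
    rw [h2]
    exact h1
  -- uniform bound via Banach–Steinhaus
  set Sn : ℕ → E →L[ℝ] E := fun n => ∑ j ∈ Finset.range n, (x' j).smulRight (x j) with hSn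
  have hSnapp : ∀ n v, Sn n v = A v n := by
    intro n v
    rw [hSn, hA]
    simp [ContinuousLinearMap.sum_apply, ContinuousLinearMap.smulRight_apply]
  obtain ⟨C, hC⟩ : ∃ C, ∀ n, ‖Sn n‖ ≤ C := by
    apply banach_steinhaus
    intro v
    obtain ⟨R, hR0, hR⟩ := cauchySeq_bdd (hx v).cauchySeq
    refine ⟨R, fun n => ?_⟩
    rw [hSnapp]
    have h5 := hR n 0
    rw [dist_eq_norm] at h5
    have h6 : A v 0 = 0 := hAzero v
    have h7 : A v n - A v 0 = A v n := by rw [h6, sub_zero]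
    have h8 : dist (A v n) (A v 0) = ‖A v n‖ := by rw [dist_eq_norm, h7]
    have h9 : dist (A v n) (A v 0) < R := hR n 0
    linarith
  set K := max C 1 with hK
  have hK1 : (1:ℝ) ≤ K := le_max_right _ _
  have hKC : C ≤ K := le_max_left _ _
  have hsqbound : ∀ v n, ‖sq v n‖ ≤ K * ‖v‖ := by
    intro v n
    rw [hsq_eq v n, Prod.norm_def]
    apply max_le
    · have h1 : ‖A v n‖ = ‖Sn n v‖ := by rw [hSnapp]
      have h2 : ‖Sn n v‖ ≤ ‖Sn n‖ * ‖v‖ := (Sn n).le_opNorm v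
      nlinarith [norm_nonneg v, hC n]
    · have h3 := hBdiff v 0 n (Nat.zero_le n)
      rw [hBzero v, sub_zero, pow_zero, one_mul] at h3
      nlinarith [norm_nonneg v]
  -- the operator T
  set Tb : E → (ℕ →ᵇ X) := fun v => BoundedContinuousFunction.ofNormedAddCommGroup (sq v)
    continuous_of_discreteTopology (K * ‖v‖) (hsqbound v) with hTb
  have hTbapp : ∀ v n, Tb v n = sq v n := fun v n => rfl
  have hTmem : ∀ v, Tb v ∈ W g := by
    intro v
    refine ⟨?_, fun n => ?_, ?_⟩
    · rw [hTbapp, hsq]; simp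
    · rw [hTbapp, hTbapp, hsq]
      simp only [Finset.sum_range_succ]
      rw [add_sub_cancel_left]
      exact Submodule.mem_span_singleton.2 ⟨x' n v, rfl⟩
    · have : ⇑(Tb v) = sq v := rfl
      rw [this]; exact hsqcauchy v
  set Tlin : E →ₗ[ℝ] W g :=
    { toFun := fun v => ⟨Tb v, hTmem v⟩
      map_add' := by
        intro u v
        apply Subtype.ext
        apply BoundedContinuousFunction.ext
        intro n
        show sq (u + v) n = (Tb u + Tb v) n
        rw [BoundedContinuousFunction.add_apply, hTbapp, hTbapp, hsq]
        simp [map_add, add_smul, Finset.sum_add_distrib]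
      map_smul' := by
        intro c v
        apply Subtype.ext
        apply BoundedContinuousFunction.ext
        intro n
        show sq (c • v) n = (c • Tb v) n
        rw [BoundedContinuousFunction.smul_apply, hTbapp, hsq]
        simp [map_smul, smul_smul, Finset.smul_sum] } with hTlin
  have hTnorm : ∀ v, ‖Tlin v‖ ≤ K * ‖v‖ := by
    intro v
    have h0 : (0:ℝ) ≤ K * ‖v‖ := by nlinarith [norm_nonneg v]
    show ‖Tb v‖ ≤ K * ‖v‖
    rw [BoundedContinuousFunction.norm_le h0]
    intro n
    rw [hTbapp]
    exact hsqbound v n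
  set T : E →L[ℝ] W g := Tlin.mkContinuous K hTnorm with hT
  have hTapp : ∀ v, ((T v : W g) : ℕ →ᵇ X) = Tb v := fun v => rfl
  set S : W g →L[ℝ] E := (ContinuousLinearMap.fst ℝ E (ℕ →ᵇ ℝ)).comp (limCLM g) with hS
  have hST : ∀ v, S (T v) = v := by
    intro v
    have h1 := tendsto_limCLM g (T v)
    have h2 : Tendsto (fun n => (((T v : W g) : ℕ →ᵇ X) n).1) atTop (𝓝 ((limCLM g (T v)).1)) :=
      ((continuous_fst).tendsto _).comp h1
    have h4 : (fun n => (((T v : W g) : ℕ →ᵇ X) n).1) = A v := by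
      funext n
      rw [hTapp, hTbapp, hsq_eq]
    rw [h4] at h2
    have h5 : (limCLM g (T v)).1 = v := tendsto_nhds_unique h2 (hx v)
    rw [hS]
    simpa using h5
  set P : W g →L[ℝ] W g := T.comp S with hPdef
  have hproj : ∀ y, P (P y) = P y := by
    intro y
    rw [hPdef]
    simp only [ContinuousLinearMap.comp_apply]
    rw [hST]
  have hrange_mem : ∀ v, T v ∈ LinearMap.range (P : (W g) →ₗ[ℝ] (W g)) := by
    intro v
    refine ⟨T v, ?_⟩
    show P (T v) = T v
    rw [hPdef]
    simp only [ContinuousLinearMap.comp_apply]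
    rw [hST]
  refine ⟨WSpace g hg, P, hproj, ⟨?_⟩⟩
  exact
    { toFun := fun v => ⟨T v, hrange_mem v⟩
      invFun := fun y => S y.1
      map_add' := fun u v => Subtype.ext (map_add T u v)
      map_smul' := fun c v => Subtype.ext (map_smul T c v)
      left_inv := fun v => hST v
      right_inv := by
        rintro ⟨y, u, hu⟩
        apply Subtype.ext
        show T (S y) = y
        rw [← hu]
        show T (S (P u)) = P u
        exact congrArg T (hST (S u))
      continuous_toFun := T.continuous.subtype_mk _
      continuous_invFun := S.continuous.comp continuous_subtype_val }

end ADProof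

end Forward

/-- A Banach space admits an atomic decomposition iff it is isomorphic to a complemented
subspace of a Banach space with a Schauder basis. -/
theorem stmt2 {E : Type u} [NormedAddCommGroup E] [NormedSpace ℝ E] [CompleteSpace E] :
    (∃ (x' : ℕ → E →L[ℝ] ℝ) (x : ℕ → E), ∀ v : E,
        Tendsto (fun n => ∑ j ∈ Finset.range n, x' j v • x j) atTop (𝓝 v)) ↔
    (∃ (F : BanachWithBasis.{u}) (P : F.carrier →L[ℝ] F.carrier),
        (∀ w, P (P w) = P w) ∧
        Nonempty (E ≃L[ℝ] LinearMap.range (P : F.carrier →ₗ[ℝ] F.carrier))) := by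
  constructor
  · rintro ⟨x', x, hx⟩
    exact ADProof.forward x' x hx
  · rintro ⟨F, P, hP, ⟨e⟩⟩
    exact ADProof.reverse F P hP e
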